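/- For every continuous path p : [0,1] → X into a Hausdorff space X, there exist a regular path q : [0,1] → X and a reparametrization φ of [0,1] such that p = q ∘ φ. -/

import Mathlib

open Set Classical

/-- A reparametrization of the unit interval: continuous, weakly increasing,
maps `[0,1]` into `[0,1]`, preserves endpoints. -/
def Reparam (φ : ℝ → ℝ) : Prop :=
  ContinuousOn φ (Set.Icc 0 1) ∧ MonotoneOn φ (Set.Icc 0 1) ∧
  Set.MapsTo φ (Set.Icc 0 1) (Set.Icc 0 1) ∧ φ 0 = 0 ∧ φ 1 = 1

/-- `J` is a stop interval of `φ`: a non-degenerate preimage of a point. -/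
def IsStopIntervalOf (φ : ℝ → ℝ) (J : Set ℝ) : Prop :=
  ∃ t : ℝ, Set.Icc 0 1 ∩ φ ⁻¹' {t} = J ∧ J.Nontrivial

/-- `t` is a stop value of `φ`. -/
def IsStopValueOf (φ : ℝ → ℝ) (t : ℝ) : Prop :=
  (Set.Icc 0 1 ∩ φ ⁻¹' {t}).Nontrivial

/-- The natural order on disjoint intervals: every point of `J` is below every point of `J'`. -/
def IntLT (J J' : Set ℝ) : Prop := ∀ x ∈ J, ∀ y ∈ J', x < y

/-- Supremum with the convention that the sup of the empty family is `0`. -/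
noncomputable def sSup0 (S : Set ℝ) : ℝ := if S.Nonempty then sSup S else 0

/-- Infimum with the convention that the inf of the empty family is `1`. -/
noncomputable def sInf1 (S : Set ℝ) : ℝ := if S.Nonempty then sInf S else 1

/-- A path `q` is regular if it is constant or not constant on any
non-degenerate closed subinterval of `[0,1]`. -/
def IsRegularPath {X : Type*} (q : ℝ → X) : Prop :=
  (∀ s ∈ Set.Icc (0:ℝ) 1, ∀ t ∈ Set.Icc (0:ℝ) 1, q s = q t) ∨
  (∀ a b : ℝ, 0 ≤ a → a < b → b ≤ 1 →
    ∃ s ∈ Set.Icc a b, ∃ t ∈ Set.Icc a b, q s ≠ q t)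


section Aux

private lemma runSup_cont {ψ : ℝ → ℝ} {r s : ℝ} (hψ : ContinuousOn ψ (Icc r s)) :
    ContinuousOn (fun t => sSup (ψ '' Icc r t)) (Icc r s) := by
  -- boundedness facts
  have hbdd : ∀ u, u ∈ Icc r s → BddAbove (ψ '' Icc r u) := fun u hu =>
    (isCompact_Icc.image_of_continuousOn
      (hψ.mono (Icc_subset_Icc le_rfl hu.2))).bddAbove
  have hne : ∀ u, r ≤ u → (ψ '' Icc r u).Nonempty :=
    fun u hu => (nonempty_Icc.mpr hu).image ψ
  have hmono : ∀ u v, u ∈ Icc r s → v ∈ Icc r s → u ≤ v →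
      sSup (ψ '' Icc r u) ≤ sSup (ψ '' Icc r v) := by
    intro u v hu hv huv
    exact csSup_le_csSup (hbdd v hv) (hne u hu.1) (image_mono (Icc_subset_Icc le_rfl huv))
  have hsplit : ∀ u v, u ∈ Icc r s → v ∈ Icc r s → u ≤ v →
      sSup (ψ '' Icc r v) = max (sSup (ψ '' Icc r u)) (sSup (ψ '' Icc u v)) := by
    intro u v hu hv huv
    rw [← Icc_union_Icc_eq_Icc hu.1 huv, image_union]
    exact csSup_union (hbdd u hu) (hne u hu.1)
      ((isCompact_Icc.image_of_continuousOn
        (hψ.mono (Icc_subset_Icc hu.1 hv.2))).bddAbove)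
      ((nonempty_Icc.mpr huv).image ψ)
  intro t ht
  rw [Metric.continuousWithinAt_iff]
  intro ε hε
  obtain ⟨δ, hδ, hδ'⟩ := Metric.continuousWithinAt_iff.mp (hψ t ht) (ε/3) (by linarith)
  refine ⟨δ, hδ, fun y hy hyt => ?_⟩
  set u := min t y with hu
  set v := max t y with hv
  have huI : u ∈ Icc r s := ⟨le_min ht.1 hy.1, (min_le_left _ _).trans ht.2⟩
  have hvI : v ∈ Icc r s := ⟨ht.1.trans (le_max_left _ _), max_le ht.2 hy.2⟩
  have huv : u ≤ v := min_le_max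
  -- all points of [u,v] are within δ of t
  have hclose : ∀ z, z ∈ Icc u v → dist (ψ z) (ψ t) < ε/3 := by
    intro z hz
    refine hδ' (x := z) ⟨huI.1.trans hz.1, hz.2.trans hvI.2⟩ ?_
    rw [Real.dist_eq, abs_lt]
    rw [Real.dist_eq, abs_lt] at hyt
    constructor
    · have : u - t ≤ z - t := by linarith [hz.1]
      have hu2 : -δ < u - t := by
        rcases min_cases t y with ⟨h1, _⟩ | ⟨h1, _⟩ <;> rw [hu, h1] <;> linarith [hyt.1]
      linarith
    · have : z - t ≤ v - t := by linarith [hz.2]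
      have hv2 : v - t < δ := by
        rcases max_cases t y with ⟨h1, _⟩ | ⟨h1, _⟩ <;> rw [hv, h1] <;> linarith [hyt.2]
      linarith
  -- bound the increment
  have hSuv : sSup (ψ '' Icc u v) ≤ ψ t + ε/3 := by
    refine csSup_le ((nonempty_Icc.mpr huv).image ψ) ?_
    rintro x ⟨z, hz, rfl⟩
    have := hclose z hz
    rw [Real.dist_eq, abs_lt] at this
    linarith [this.2]
  have hψtu : ψ t ≤ sSup (ψ '' Icc r u) + ε/3 := by
    have hud : dist (ψ u) (ψ t) < ε/3 := hclose u ⟨le_rfl, huv⟩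
    rw [Real.dist_eq, abs_lt] at hud
    have : ψ u ≤ sSup (ψ '' Icc r u) :=
      le_csSup (hbdd u huI) (mem_image_of_mem ψ ⟨huI.1, le_rfl⟩)
    linarith [hud.1]
  have hkey : sSup (ψ '' Icc r v) ≤ sSup (ψ '' Icc r u) + ε/3 + ε/3 := by
    rw [hsplit u v huI hvI huv]
    exact max_le (by linarith [hmono u v huI hvI huv]) (by linarith)
  have h1 : sSup (ψ '' Icc r u) ≤ sSup (ψ '' Icc r t) := hmono u t huI ht (min_le_left _ _)
  have h2 : sSup (ψ '' Icc r u) ≤ sSup (ψ '' Icc r y) := hmono u y huI hy (min_le_right _ _)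
  have h3 : sSup (ψ '' Icc r t) ≤ sSup (ψ '' Icc r v) := hmono t v ht hvI (le_max_left _ _)
  have h4 : sSup (ψ '' Icc r y) ≤ sSup (ψ '' Icc r v) := hmono y v hy hvI (le_max_right _ _)
  rw [Real.dist_eq, abs_lt]
  constructor <;> linarith


private lemma exists_rat_pair {X : Type*} [TopologicalSpace X] [T2Space X] {p : ℝ → X}
    (hp : ContinuousOn p (Icc 0 1)) {x y : ℝ} (hx : x ∈ Icc (0:ℝ) 1) (hy : y ∈ Icc (0:ℝ) 1)
    (hxy : x < y) (hnc : ¬ ∀ u ∈ Icc x y, ∀ v ∈ Icc x y, p u = p v) :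
    ∃ r s : ℚ, x < (r:ℝ) ∧ (r:ℝ) < (s:ℝ) ∧ (s:ℝ) < y ∧ p r ≠ p s := by
  by_contra hcon
  push_neg at hcon
  obtain ⟨q0, hq0x, hq0y⟩ := exists_rat_btwn hxy
  have allrat : ∀ q : ℚ, x < (q:ℝ) → (q:ℝ) < y → p q = p q0 := by
    intro q hq1 hq2
    rcases lt_trichotomy (q:ℝ) (q0:ℝ) with h | h | h
    · exact hcon q q0 hq1 h hq0y
    · rw [Rat.cast_injective h]
    · exact (hcon q0 q hq0x h hq2).symm
  set C : Set ℝ := Icc 0 1 ∩ p ⁻¹' {p q0} with hC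
  have hCclosed : IsClosed C :=
    hp.preimage_isClosed_of_isClosed isClosed_Icc isClosed_singleton
  set D : Set ℝ := {t | (∃ q : ℚ, (q:ℝ) = t) ∧ t ∈ Ioo x y} with hD
  have hDC : D ⊆ C := by
    rintro t ⟨⟨q, rfl⟩, ht⟩
    exact ⟨⟨hx.1.trans ht.1.le, ht.2.le.trans hy.2⟩, allrat q ht.1 ht.2⟩
  have hsub : Icc x y ⊆ closure D := by
    intro t ht
    rw [Metric.mem_closure_iff]
    intro ε hε
    have hlo : max x (t - ε) < min y (t + ε) := by
      rcases ht with ⟨h1, h2⟩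
      simp only [max_lt_iff, lt_min_iff]
      refine ⟨⟨?_, ?_⟩, ⟨?_, ?_⟩⟩ <;> linarith
    obtain ⟨q, hq1, hq2⟩ := exists_rat_btwn hlo
    refine ⟨q, ⟨⟨q, rfl⟩, ?_, ?_⟩, ?_⟩
    · exact (le_max_left _ _).trans_lt hq1
    · exact hq2.trans_le (min_le_left _ _)
    · rw [Real.dist_eq, abs_lt]
      constructor
      · have := hq2.trans_le (min_le_right _ _); linarith
      · have := (le_max_right x (t - ε)).trans_lt hq1; linarith
  have hIccC : Icc x y ⊆ C := fun t ht =>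
    hCclosed.closure_eq ▸ (closure_mono hDC) (hsub ht)
  exact hnc fun u hu v hv => ((hIccC hu).2.trans (hIccC hv).2.symm)


private lemma exists_sep {X : Type*} [TopologicalSpace X] [T2Space X] {p : ℝ → X}
    (hp : ContinuousOn p (Icc 0 1)) {r s : ℝ} (hr : r ∈ Icc (0:ℝ) 1) (hs : s ∈ Icc (0:ℝ) 1)
    (hne : p r ≠ p s) :
    ∃ ψ : ℝ → ℝ, ContinuousOn ψ (Icc 0 1) ∧ (∀ t, ψ t ∈ Icc (0:ℝ) 1) ∧ ψ r = 0 ∧ ψ s = 1 ∧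
      ∀ a ∈ Icc (0:ℝ) 1, ∀ b ∈ Icc (0:ℝ) 1, p a = p b → ψ a = ψ b := by
  set K : Set X := p '' Icc 0 1 with hK
  have hKc : IsCompact K := isCompact_Icc.image_of_continuousOn hp
  haveI : CompactSpace K := isCompact_iff_compactSpace.mp hKc
  set A : K := ⟨p r, mem_image_of_mem p hr⟩
  set B : K := ⟨p s, mem_image_of_mem p hs⟩
  have hAB : A ≠ B := fun h => hne (congrArg Subtype.val h)
  obtain ⟨f, hf0, hf1, hf01⟩ :=
    exists_continuous_zero_one_of_isClosed (isClosed_singleton (x := A))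
      (isClosed_singleton (x := B)) (disjoint_singleton.mpr hAB)
  set ψ : ℝ → ℝ := fun t => if ht : t ∈ Icc (0:ℝ) 1 then f ⟨p t, mem_image_of_mem p ht⟩ else 0
    with hψ
  refine ⟨ψ, ?_, ?_, ?_, ?_, ?_⟩
  · rw [continuousOn_iff_continuous_restrict]
    have : (Icc (0:ℝ) 1).domRestrict ψ =
        fun t : Icc (0:ℝ) 1 => f ⟨p t, mem_image_of_mem p t.2⟩ := by
      funext t; simp only [domRestrict, hψ, dif_pos t.2]
    rw [this]
    exact f.continuous.comp ((hp.restrict).subtype_mk _)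
  · intro t
    by_cases ht : t ∈ Icc (0:ℝ) 1
    · simp only [hψ, dif_pos ht]; exact hf01 _
    · simp only [hψ, dif_neg ht]; exact ⟨le_rfl, zero_le_one⟩
  · simp only [hψ, dif_pos hr]; exact hf0 rfl
  · simp only [hψ, dif_pos hs]; exact hf1 rfl
  · intro a ha b hb hab
    simp only [hψ, dif_pos ha, dif_pos hb]
    congr 1
    exact Subtype.ext hab

end Aux

set_option maxHeartbeats 1000000 in
private theorem stmt_14_aux {X : Type*} [TopologicalSpace X] [T2Space X]
    (p : ℝ → X) (hp : ContinuousOn p (Set.Icc 0 1)) :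
    ∃ q : ℝ → X, ∃ φ : ℝ → ℝ,
      ContinuousOn q (Set.Icc 0 1) ∧
      ((∀ s ∈ Set.Icc (0:ℝ) 1, ∀ t ∈ Set.Icc (0:ℝ) 1, q s = q t) ∨
       (∀ a b : ℝ, 0 ≤ a → a < b → b ≤ 1 →
         ∃ s ∈ Set.Icc a b, ∃ t ∈ Set.Icc a b, q s ≠ q t)) ∧
      (ContinuousOn φ (Set.Icc 0 1) ∧ MonotoneOn φ (Set.Icc 0 1) ∧
        Set.MapsTo φ (Set.Icc 0 1) (Set.Icc 0 1) ∧ φ 0 = 0 ∧ φ 1 = 1) ∧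
      ∀ t ∈ Set.Icc (0:ℝ) 1, p t = q (φ t) := by
  by_cases hconst : ∀ s ∈ Icc (0:ℝ) 1, ∀ t ∈ Icc (0:ℝ) 1, p s = p t
  · exact ⟨fun _ => p 0, id, continuousOn_const, Or.inl fun _ _ _ _ => rfl,
      ⟨continuousOn_id, fun a _ b _ h => h, fun t ht => ht, rfl, rfl⟩,
      fun t ht => hconst t ht 0 (left_mem_Icc.mpr zero_le_one)⟩
  -- p is not constant on [0,1]
  have h01 : (0:ℝ) ∈ Icc (0:ℝ) 1 := left_mem_Icc.mpr zero_le_one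
  have h11 : (1:ℝ) ∈ Icc (0:ℝ) 1 := right_mem_Icc.mpr zero_le_one
  have hnc01 : ¬ ∀ u ∈ Icc (0:ℝ) 1, ∀ v ∈ Icc (0:ℝ) 1, p u = p v := hconst
  -- the index type of "good" rational pairs
  let G := {rs : ℚ × ℚ // ((rs.1:ℝ) ∈ Icc (0:ℝ) 1) ∧ ((rs.2:ℝ) ∈ Icc (0:ℝ) 1) ∧
      ((rs.1:ℝ) < (rs.2:ℝ)) ∧ p (rs.1:ℝ) ≠ p (rs.2:ℝ)}
  have hGne : Nonempty G := by
    obtain ⟨r, s, h1, h2, h3, h4⟩ := exists_rat_pair hp h01 h11 zero_lt_one hnc01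
    exact ⟨⟨(r, s), ⟨h1.le, (h2.trans h3).le⟩, ⟨(h1.trans h2).le, h3.le⟩, h2, h4⟩⟩
  obtain ⟨e, he⟩ := exists_surjective_nat G
  -- accessors
  set a : G → ℝ := fun g => ((g.1.1 : ℚ) : ℝ) with ha_def
  set b : G → ℝ := fun g => ((g.1.2 : ℚ) : ℝ) with hb_def
  have haI : ∀ g, a g ∈ Icc (0:ℝ) 1 := fun g => g.2.1
  have hbI : ∀ g, b g ∈ Icc (0:ℝ) 1 := fun g => g.2.2.1
  have hab : ∀ g, a g < b g := fun g => g.2.2.2.1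
  -- separating functions
  choose ψ hψc hψm hψ0 hψ1 hψe using
    fun g : G => exists_sep hp (haI g) (hbI g) g.2.2.2.2
  -- clamping and the running-sup family
  set c : G → ℝ → ℝ := fun g t => max (a g) (min t (b g)) with hc_def
  have hca : ∀ g t, a g ≤ c g t := fun g t => le_max_left _ _
  have hcb : ∀ g t, c g t ≤ b g := fun g t => max_le (hab g).le (min_le_right _ _)
  have hcmono : ∀ g, Monotone (c g) :=
    fun g t t' h => max_le_max le_rfl (min_le_min h le_rfl)
  set F : G → ℝ → ℝ := fun g t => sSup (ψ g '' Icc (a g) (c g t)) with hF_def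
  have hFne : ∀ g t, (ψ g '' Icc (a g) (c g t)).Nonempty :=
    fun g t => (nonempty_Icc.mpr (hca g t)).image _
  have hbddgen : ∀ g (s : Set ℝ), BddAbove (ψ g '' s) := by
    intro g s
    refine ⟨1, ?_⟩
    rintro _ ⟨z, _, rfl⟩
    exact (hψm g z).2
  have hF0le : ∀ g t, 0 ≤ F g t := fun g t =>
    (hψm g (a g)).1.trans (le_csSup (hbddgen g _)
      (mem_image_of_mem _ (left_mem_Icc.mpr (hca g t))))
  have hFle1 : ∀ g t, F g t ≤ 1 := by
    intro g t
    refine csSup_le (hFne g t) ?_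
    rintro _ ⟨z, _, rfl⟩
    exact (hψm g z).2
  have hFmono : ∀ g, Monotone (F g) := fun g t t' h =>
    csSup_le_csSup (hbddgen g _) (hFne g t)
      (image_mono (Icc_subset_Icc le_rfl (hcmono g h)))
  have hFcont : ∀ g, ContinuousOn (F g) (Icc 0 1) := by
    intro g
    have h1 : ContinuousOn (fun u => sSup (ψ g '' Icc (a g) u)) (Icc (a g) (b g)) :=
      runSup_cont ((hψc g).mono (Icc_subset_Icc (haI g).1 (hbI g).2))
    have h2 : Continuous (c g) :=
      continuous_const.max (continuous_id.min continuous_const)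
    exact h1.comp h2.continuousOn fun t _ => ⟨hca g t, hcb g t⟩
  have hFlow : ∀ g x, x ≤ a g → F g x = 0 := by
    intro g x hx
    have hcx : c g x = a g := by
      rw [hc_def]
      simp only
      rw [min_eq_left (hx.trans (hab g).le), max_eq_left hx]
    rw [hF_def]
    simp only
    rw [hcx, Icc_self, image_singleton, csSup_singleton, hψ0]
  have hFhigh : ∀ g y, b g ≤ y → 1 ≤ F g y := by
    intro g y hy
    have hcy : c g y = b g := by
      rw [hc_def]
      simp only
      rw [min_eq_right hy, max_eq_right (hab g).le]
    rw [hF_def]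
    simp only
    rw [hcy, ← hψ1 g]
    exact le_csSup (hbddgen g _) (mem_image_of_mem _ (right_mem_Icc.mpr (hab g).le))
  -- F g is constant on intervals where p is constant
  have hFconst : ∀ g, ∀ x ∈ Icc (0:ℝ) 1, ∀ y ∈ Icc (0:ℝ) 1, x ≤ y →
      (∀ u ∈ Icc x y, ∀ v ∈ Icc x y, p u = p v) → F g x = F g y := by
    intro g x hx y hy hxy hpc
    have hcxy : c g x ≤ c g y := hcmono g hxy
    rcases eq_or_lt_of_le hcxy with heq | hlt
    · rw [hF_def]; simp only; rw [heq]
    · have hxcx : x ≤ c g x := by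
        rcases le_total x (b g) with h | h
        · rw [hc_def]; simp only; rw [min_eq_left h]; exact le_max_right _ _
        · exfalso
          have : c g x = b g := by
            rw [hc_def]; simp only; rw [min_eq_right h, max_eq_right (hab g).le]
          exact absurd (hlt.trans_le (hcb g y)) (by rw [this]; exact lt_irrefl _)
      have hcyy : c g y ≤ y := by
        rcases le_total (min y (b g)) (a g) with h | h
        · exfalso
          have : c g y = a g := by rw [hc_def]; simp only; rw [max_eq_left h]
          exact absurd ((hca g x).trans_lt hlt) (by rw [this]; exact lt_irrefl _)
        · rw [hc_def]; simp only; rw [max_eq_right h]; exact min_le_left _ _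
      have hsub : Icc (c g x) (c g y) ⊆ Icc x y :=
        Icc_subset_Icc hxcx hcyy
      have hsub01 : Icc x y ⊆ Icc (0:ℝ) 1 := Icc_subset_Icc hx.1 hy.2
      have hsplit : Icc (a g) (c g y) = Icc (a g) (c g x) ∪ Icc (c g x) (c g y) :=
        (Icc_union_Icc_eq_Icc (hca g x) hcxy).symm
      have hmid : sSup (ψ g '' Icc (c g x) (c g y)) = ψ g (c g x) := by
        refine le_antisymm (csSup_le ((nonempty_Icc.mpr hcxy).image _) ?_)
          (le_csSup (hbddgen g _) (mem_image_of_mem _ (left_mem_Icc.mpr hcxy)))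
        rintro _ ⟨z, hz, rfl⟩
        have hz' : z ∈ Icc x y := hsub hz
        have hcx' : c g x ∈ Icc x y := hsub (left_mem_Icc.mpr hcxy)
        exact le_of_eq (hψe g z (hsub01 hz') (c g x) (hsub01 hcx')
          (hpc z hz' (c g x) hcx'))
      have hle : ψ g (c g x) ≤ F g x :=
        le_csSup (hbddgen g _) (mem_image_of_mem _ (right_mem_Icc.mpr (hca g x)))
      rw [hF_def]
      simp only
      rw [hsplit, image_union, csSup_union (hbddgen g _) ((nonempty_Icc.mpr (hca g x)).image _)
        (hbddgen g _) ((nonempty_Icc.mpr hcxy).image _), hmid]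
      exact (max_eq_left hle).symm
  -- the raw parametrization function
  set φ₀ : ℝ → ℝ := fun t => ∑' n : ℕ, ((1:ℝ)/2)^n * F (e n) t with hφ₀_def
  have hterm_nonneg : ∀ t (n : ℕ), 0 ≤ ((1:ℝ)/2)^n * F (e n) t :=
    fun t n => mul_nonneg (by positivity) (hF0le _ t)
  have hsum : ∀ t, Summable (fun n : ℕ => ((1:ℝ)/2)^n * F (e n) t) := by
    intro t
    refine Summable.of_nonneg_of_le (hterm_nonneg t)
      (fun n => mul_le_of_le_one_right (by positivity) (hFle1 _ t)) summable_geometric_two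
  have hφ₀nonneg : ∀ t, 0 ≤ φ₀ t := fun t => tsum_nonneg (hterm_nonneg t)
  have hφ₀mono : ∀ x y, x ≤ y → φ₀ x ≤ φ₀ y := fun x y h =>
    Summable.tsum_le_tsum (fun n => mul_le_mul_of_nonneg_left (hFmono _ h) (by positivity))
      (hsum x) (hsum y)
  have hφ₀cont : ContinuousOn φ₀ (Icc 0 1) := by
    refine continuousOn_tsum (fun n => continuousOn_const.mul (hFcont (e n)))
      summable_geometric_two (fun n x _ => ?_)
    rw [Real.norm_eq_abs, abs_mul, abs_pow, abs_of_nonneg (by norm_num : (0:ℝ) ≤ 1/2),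
      abs_of_nonneg (hF0le _ x)]
    exact mul_le_of_le_one_right (by positivity) (hFle1 _ x)
  have hφ₀0 : φ₀ 0 = 0 := by
    rw [hφ₀_def]
    simp only
    convert tsum_zero with n
    rw [hFlow (e n) 0 (haI (e n)).1, mul_zero]
  have hφ₀1pos : 0 < φ₀ 1 := by
    have h1 : ((1:ℝ)/2)^0 * F (e 0) 1 ≤ φ₀ 1 :=
      Summable.le_tsum (hsum 1) 0 (fun j _ => hterm_nonneg 1 j)
    have h2 : (1:ℝ) ≤ F (e 0) 1 := hFhigh (e 0) 1 (hbI (e 0)).2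
    calc (0:ℝ) < 1 := one_pos
    _ ≤ ((1:ℝ)/2)^0 * F (e 0) 1 := by rw [pow_zero, one_mul]; exact h2
    _ ≤ φ₀ 1 := h1
  have hφ₀const : ∀ x ∈ Icc (0:ℝ) 1, ∀ y ∈ Icc (0:ℝ) 1, x ≤ y →
      (∀ u ∈ Icc x y, ∀ v ∈ Icc x y, p u = p v) → φ₀ x = φ₀ y := by
    intro x hx y hy hxy hpc
    exact tsum_congr fun n => by rw [hFconst (e n) x hx y hy hxy hpc]
  have hφ₀strict : ∀ x ∈ Icc (0:ℝ) 1, ∀ y ∈ Icc (0:ℝ) 1, x < y →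
      ¬(∀ u ∈ Icc x y, ∀ v ∈ Icc x y, p u = p v) → φ₀ x < φ₀ y := by
    intro x hx y hy hxy hpc
    obtain ⟨r, s, h1, h2, h3, h4⟩ := exists_rat_pair hp hx hy hxy hpc
    set g : G := ⟨(r, s), ⟨hx.1.trans h1.le, (h2.trans h3).le.trans hy.2⟩,
      ⟨hx.1.trans (h1.trans h2).le, h3.le.trans hy.2⟩, h2, h4⟩ with hg_def
    obtain ⟨n, hn⟩ := he g
    refine Summable.tsum_lt_tsum_of_nonneg (hterm_nonneg x)
      (fun m => mul_le_mul_of_nonneg_left (hFmono _ hxy.le) (by positivity))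
      (i := n) ?_ (hsum y)
    rw [hn]
    have hax : F g x = 0 := hFlow g x h1.le
    have hby : (1:ℝ) ≤ F g y := hFhigh g y h3.le
    rw [hax, mul_zero]
    exact mul_pos (by positivity) (one_pos.trans_le hby)
  -- normalize
  set φ : ℝ → ℝ := fun t => φ₀ t / φ₀ 1 with hφ_def
  have hφcont : ContinuousOn φ (Icc 0 1) := hφ₀cont.div_const _
  have hφmono : ∀ x y, x ≤ y → φ x ≤ φ y := fun x y h =>
    (div_le_div_iff_of_pos_right hφ₀1pos).mpr (hφ₀mono x y h)
  have hφmaps : MapsTo φ (Icc (0:ℝ) 1) (Icc (0:ℝ) 1) := fun t ht =>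
    ⟨div_nonneg (hφ₀nonneg t) hφ₀1pos.le, (div_le_one hφ₀1pos).mpr (hφ₀mono t 1 ht.2)⟩
  have hφ0 : φ 0 = 0 := by rw [hφ_def]; simp only; rw [hφ₀0, zero_div]
  have hφ1 : φ 1 = 1 := div_self hφ₀1pos.ne'
  -- key equivalence
  have hkey1 : ∀ x ∈ Icc (0:ℝ) 1, ∀ y ∈ Icc (0:ℝ) 1, x ≤ y → φ x = φ y →
      ∀ u ∈ Icc x y, ∀ v ∈ Icc x y, p u = p v := by
    intro x hx y hy hxy hφeq
    rcases eq_or_lt_of_le hxy with rfl | hlt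
    · intro u hu v hv
      have hu' : u = x := le_antisymm hu.2 hu.1
      have hv' : v = x := le_antisymm hv.2 hv.1
      rw [hu', hv']
    · by_contra hpc
      have := hφ₀strict x hx y hy hlt hpc
      have : φ x < φ y := (div_lt_div_iff_of_pos_right hφ₀1pos).mpr this
      exact absurd hφeq this.ne
  have hkey2 : ∀ x ∈ Icc (0:ℝ) 1, ∀ y ∈ Icc (0:ℝ) 1, x ≤ y →
      (∀ u ∈ Icc x y, ∀ v ∈ Icc x y, p u = p v) → φ x = φ y := by
    intro x hx y hy hxy hpc
    rw [hφ_def]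
    simp only
    rw [hφ₀const x hx y hy hxy hpc]
  -- surjectivity via IVT
  have hsurj : ∀ u ∈ Icc (0:ℝ) 1, ∃ t ∈ Icc (0:ℝ) 1, φ t = u := by
    intro u hu
    have := intermediate_value_Icc zero_le_one hφcont
    rw [hφ0, hφ1] at this
    obtain ⟨t, ht, hφt⟩ := this hu
    exact ⟨t, ht, hφt⟩
  -- minimal section
  set σ : ℝ → ℝ := fun u => sInf (Icc (0:ℝ) 1 ∩ φ ⁻¹' Ici u) with hσ_def
  have hσspec : ∀ u ∈ Icc (0:ℝ) 1, σ u ∈ Icc (0:ℝ) 1 ∧ φ (σ u) = u ∧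
      ∀ t ∈ Icc (0:ℝ) 1, u ≤ φ t → σ u ≤ t := by
    intro u hu
    have hSc : IsClosed (Icc (0:ℝ) 1 ∩ φ ⁻¹' Ici u) :=
      hφcont.preimage_isClosed_of_isClosed isClosed_Icc isClosed_Ici
    have hne : (1:ℝ) ∈ Icc (0:ℝ) 1 ∩ φ ⁻¹' Ici u := ⟨h11, by rw [mem_preimage, mem_Ici, hφ1]; exact hu.2⟩
    have hbdd : BddBelow (Icc (0:ℝ) 1 ∩ φ ⁻¹' Ici u) := bddBelow_Icc.mono inter_subset_left
    have hmem := hSc.csInf_mem ⟨1, hne⟩ hbdd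
    have hmin : ∀ t ∈ Icc (0:ℝ) 1, u ≤ φ t → σ u ≤ t :=
      fun t ht hφt => csInf_le hbdd ⟨ht, hφt⟩
    refine ⟨hmem.1, le_antisymm ?_ hmem.2, hmin⟩
    obtain ⟨t, ht, hφt⟩ := hsurj u hu
    calc φ (σ u) ≤ φ t := hφmono _ _ (hmin t ht hφt.ge)
    _ = u := hφt
  set q : ℝ → X := fun u => p (σ u) with hq_def
  -- factorization
  have hfact : ∀ t ∈ Icc (0:ℝ) 1, p t = q (φ t) := by
    intro t ht
    have hu : φ t ∈ Icc (0:ℝ) 1 := hφmaps ht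
    obtain ⟨hs₀, hφs₀, hmin⟩ := hσspec (φ t) hu
    have hst : σ (φ t) ≤ t := hmin t ht le_rfl
    have hc' := hkey1 _ hs₀ _ ht hst (by rw [hφs₀])
    exact hc' t (right_mem_Icc.mpr hst) _ (left_mem_Icc.mpr hst)
  -- continuity of q via the quotient map
  have hqcont : ContinuousOn q (Icc (0:ℝ) 1) := by
    haveI : CompactSpace (Icc (0:ℝ) 1) := isCompact_iff_compactSpace.mp isCompact_Icc
    set Φ : Icc (0:ℝ) 1 → Icc (0:ℝ) 1 := fun t => ⟨φ t, hφmaps t.2⟩ with hΦ_def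
    have hΦc : Continuous Φ := (hφcont.restrict).subtype_mk _
    have hΦsurj : Function.Surjective Φ := by
      rintro ⟨u, hu⟩
      obtain ⟨t, ht, hφt⟩ := hsurj u hu
      exact ⟨⟨t, ht⟩, Subtype.ext hφt⟩
    have hqm : Topology.IsQuotientMap Φ := (hΦc.isClosedMap).isQuotientMap hΦc hΦsurj
    rw [continuousOn_iff_continuous_restrict, hqm.continuous_iff]
    have : (Icc (0:ℝ) 1).domRestrict q ∘ Φ = (Icc (0:ℝ) 1).domRestrict p :=
      funext fun t => (hfact t t.2).symm
    rw [this]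
    exact hp.restrict
  -- regularity
  have hreg : ∀ A B : ℝ, 0 ≤ A → A < B → B ≤ 1 →
      ∃ s' ∈ Icc A B, ∃ t' ∈ Icc A B, q s' ≠ q t' := by
    intro A B hA hAB hB
    by_contra hno
    push_neg at hno
    have hAI : A ∈ Icc (0:ℝ) 1 := ⟨hA, hAB.le.trans hB⟩
    have hBI : B ∈ Icc (0:ℝ) 1 := ⟨hA.trans hAB.le, hB⟩
    obtain ⟨hxI, hφx, _⟩ := hσspec A hAI
    obtain ⟨hyI, hφy, _⟩ := hσspec B hBI
    have hxy : σ A < σ B := by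
      by_contra h
      push_neg at h
      have := hφmono _ _ h
      rw [hφy, hφx] at this
      exact absurd this (not_le.mpr hAB)
    have hpc : ∀ u ∈ Icc (σ A) (σ B), ∀ v ∈ Icc (σ A) (σ B), p u = p v := by
      intro u hu v hv
      have hu' : u ∈ Icc (0:ℝ) 1 := ⟨hxI.1.trans hu.1, hu.2.trans hyI.2⟩
      have hv' : v ∈ Icc (0:ℝ) 1 := ⟨hxI.1.trans hv.1, hv.2.trans hyI.2⟩
      have hφu : φ u ∈ Icc A B := by
        constructor
        · rw [← hφx]; exact hφmono _ _ hu.1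
        · rw [← hφy]; exact hφmono _ _ hu.2
      have hφv : φ v ∈ Icc A B := by
        constructor
        · rw [← hφx]; exact hφmono _ _ hv.1
        · rw [← hφy]; exact hφmono _ _ hv.2
      rw [hfact u hu', hfact v hv']
      exact hno _ hφu _ hφv
    have := hkey2 _ hxI _ hyI hxy.le hpc
    rw [hφx, hφy] at this
    exact absurd this hAB.ne
  exact ⟨q, φ, hqcont, Or.inr hreg, ⟨hφcont, fun x hx y hy h => hφmono x y h, hφmaps, hφ0, hφ1⟩, hfact⟩


/-- Every continuous path into a Hausdorff space factors as a regular path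
composed with a reparametrization. -/
theorem stmt_14 {X : Type*} [TopologicalSpace X] [T2Space X]
    (p : ℝ → X) (hp : ContinuousOn p (Set.Icc 0 1)) :
    ∃ q : ℝ → X, ∃ φ : ℝ → ℝ,
      ContinuousOn q (Set.Icc 0 1) ∧ IsRegularPath q ∧ Reparam φ ∧
      ∀ t ∈ Set.Icc (0:ℝ) 1, p t = q (φ t) := by
  obtain ⟨q, φ, h1, h2, h3, h4⟩ := stmt_14_aux p hp
  exact ⟨q, φ, h1, h2, h3, h4⟩
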